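/- Let l, r ≥ 0 be integers with r + 1 ≤ l ≤ r + 2, let q ≥ 1 be an integer, and let λ₀, λ_∞ be as in the context; for R > 0 define λ_R(s) = λ₀(s) + R·λ_∞(s). Let p : ℂ → ℂ be a polynomial with p(0) = 1 and p'(0) = 1 (the stability polynomial of an explicit Runge–Kutta method of order at least 1). Then there exist positive numbers α₀, β₀, γ₀, depending only on l, r, q and p, such that for all h > 0, ν > 0 and δt > 0 satisfying δt < ν·γ₀ and (α₀ + ν·β₀/h)·(δt/h) < 1, setting μ = δt/h and R = ν/h, one has |p(μ·λ_R(e^{iθ}))| < 1 for all 0 < θ < 2π. (Hence the fully-discretized method is stable under this Courant-type condition.) -/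

import Mathlib

/-- Optimal finite-difference coefficients for the first derivative on the
stencil `{-l, …, r}`. -/
noncomputable def aCoef (l r : ℕ) (k : ℤ) : ℝ :=
  if k = 0 then
    -∑ ν ∈ (Finset.Icc (-(l : ℤ)) (r : ℤ)).erase 0, (1 : ℝ) / (ν : ℝ)
  else
    -((-1 : ℝ) ^ k / (k : ℝ)) *
      ((Nat.factorial l * Nat.factorial r : ℕ) : ℝ) /
      ((Nat.factorial ((l : ℤ) + k).toNat * Nat.factorial ((r : ℤ) - k).toNat : ℕ) : ℝ)

/-- The symbol `λ₀(s) = -Σ_{k=-l}^{r} a_k s^k` of the advection discretization. -/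
noncomputable def lam0 (l r : ℕ) (s : ℂ) : ℂ :=
  -∑ k ∈ Finset.Icc (-(l : ℤ)) (r : ℤ), (aCoef l r k : ℂ) * s ^ k

/-- Optimal centered finite-difference coefficients for the second derivative on
the stencil `{-q, …, q}`. -/
noncomputable def bCoef (q : ℕ) (k : ℤ) : ℝ :=
  if k = 0 then
    -∑ j ∈ Finset.Icc 1 q, 2 / (j : ℝ) ^ 2
  else
    -(2 * (-1 : ℝ) ^ k / (k : ℝ) ^ 2) *
      ((Nat.factorial q * Nat.factorial q : ℕ) : ℝ) /
      ((Nat.factorial ((q : ℤ) + k).toNat * Nat.factorial ((q : ℤ) - k).toNat : ℕ) : ℝ)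

/-- The symbol `λ_∞(s) = Σ_{k=-q}^{q} b_k s^k` of the diffusion discretization. -/
noncomputable def lamInf (q : ℕ) (s : ℂ) : ℂ :=
  ∑ k ∈ Finset.Icc (-(q : ℤ)) (q : ℤ), (bCoef q k : ℂ) * s ^ k

set_option maxHeartbeats 1000000

noncomputable def aext (l r : ℕ) (k : ℤ) : ℝ := if k ≤ (r:ℤ) then aCoef l r k else 0

noncomputable def Elr (l r : ℕ) : ℝ :=
  ((if l = r + 1 then 1 else 2*l-1 : ℕ) : ℝ) *
    ((Nat.factorial l : ℕ) : ℝ) * ((Nat.factorial r : ℕ) : ℝ) /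
    ((Nat.factorial (2*l) : ℕ) : ℝ)

lemma Elr_nonneg (l r : ℕ) : 0 ≤ Elr l r := by
  unfold Elr
  positivity

lemma neg_one_zpow_neg_natCast (m : ℕ) : (-1:ℝ)^(-(m:ℤ)) = (-1:ℝ)^m := by
  rw [zpow_neg, zpow_natCast, ← inv_pow]; norm_num

lemma sum_inv_erase (l r : ℕ) (hrl : r ≤ l) :
    ∑ ν ∈ (Finset.Icc (-(l : ℤ)) (r : ℤ)).erase 0, (1 : ℝ) / (ν : ℝ)
      = -∑ ν ∈ Finset.Icc ((r:ℤ)+1) (l:ℤ), (1 : ℝ) / (ν : ℝ) := by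
  have hsplit : (Finset.Icc (-(l : ℤ)) (r : ℤ)).erase 0
      = Finset.Icc (-(l:ℤ)) (-1) ∪ Finset.Icc 1 (r:ℤ) := by
    ext k
    simp only [Finset.mem_erase, Finset.mem_Icc, Finset.mem_union]
    omega
  have hdisj : Disjoint (Finset.Icc (-(l:ℤ)) (-1)) (Finset.Icc 1 (r:ℤ)) := by
    rw [Finset.disjoint_left]
    intro a ha hb
    simp only [Finset.mem_Icc] at ha hb
    omega
  rw [hsplit, Finset.sum_union hdisj]
  have hneg : ∑ ν ∈ Finset.Icc (-(l:ℤ)) (-1), (1 : ℝ) / (ν : ℝ)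
      = -∑ ν ∈ Finset.Icc 1 (l:ℤ), (1 : ℝ) / (ν : ℝ) := by
    rw [← Finset.sum_neg_distrib]
    refine Finset.sum_nbij' (fun k => -k) (fun k => -k) ?_ ?_ ?_ ?_ ?_
    · intro a ha; simp only [Finset.mem_Icc] at *; omega
    · intro a ha; simp only [Finset.mem_Icc] at *; omega
    · intro a ha; ring
    · intro a ha; ring
    · intro a ha; push_cast; ring
  have hcat : ∑ ν ∈ Finset.Icc 1 (l:ℤ), (1 : ℝ) / (ν : ℝ)
      = ∑ ν ∈ Finset.Icc 1 (r:ℤ), (1 : ℝ) / (ν : ℝ)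
        + ∑ ν ∈ Finset.Icc ((r:ℤ)+1) (l:ℤ), (1 : ℝ) / (ν : ℝ) := by
    rw [← Finset.sum_union]
    · congr 1
      ext k
      simp only [Finset.mem_Icc, Finset.mem_union]
      omega
    · rw [Finset.disjoint_left]
      intro a ha hb
      simp only [Finset.mem_Icc] at ha hb
      omega
  rw [hneg, hcat]
  ring


lemma fact_cast_ne (n : ℕ) : ((Nat.factorial n : ℕ) : ℝ) ≠ 0 := by
  exact_mod_cast Nat.factorial_ne_zero n

lemma choose_fact_real (n k : ℕ) (h : k ≤ n) :
    ((n.choose k : ℕ) : ℝ)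
      = ((Nat.factorial n : ℕ):ℝ) /
        (((Nat.factorial k : ℕ):ℝ) * ((Nat.factorial (n-k) : ℕ):ℝ)) := by
  have h2 : ((n.choose k * Nat.factorial k * Nat.factorial (n-k) : ℕ) : ℝ)
      = ((Nat.factorial n : ℕ) : ℝ) := by
    exact_mod_cast congrArg (fun x : ℕ => (x : ℝ)) (Nat.choose_mul_factorial_mul_factorial h)
  push_cast at h2 ⊢
  field_simp [fact_cast_ne]
  linear_combination h2

lemma coeff_pair_nat (l r : ℕ) (h1 : r + 1 ≤ l) (h2 : l ≤ r + 2) (m : ℕ) (hm : m ≤ l) :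
    aext l r (m:ℤ) + aext l r (-(m:ℤ))
      = 2 * Elr l r * (-1:ℝ)^m * (((2*l).choose (l+m) : ℕ) : ℝ) := by
  have hFr : ∀ n : ℕ, ((Nat.factorial (n+1) : ℕ) : ℝ)
      = ((n:ℝ)+1) * ((Nat.factorial n : ℕ) : ℝ) := by
    intro n; rw [Nat.factorial_succ]; push_cast; ring
  rcases Nat.eq_zero_or_pos m with rfl | hm1
  · -- m = 0
    simp only [Nat.cast_zero, neg_zero, aext, if_pos (by omega : (0:ℤ) ≤ (r:ℤ)),
      aCoef, if_pos rfl, pow_zero]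
    rw [sum_inv_erase l r (by omega)]
    rcases (by omega : l = r + 1 ∨ l = r + 2) with rfl | rfl
    · rw [choose_fact_real _ _ (by omega), show 2*(r+1) - ((r+1)+0) = r+1 from by omega,
        show (r+1)+0 = r+1 from by omega]
      rw [show ((r:ℤ)+1 : ℤ) = (((r+1:ℕ)):ℤ) from by push_cast; ring] at *
      rw [show (Finset.Icc (((r+1:ℕ)):ℤ) (((r+1:ℕ)):ℤ)) = {(((r+1:ℕ)):ℤ)} from Finset.Icc_self _,
        Finset.sum_singleton]
      simp only [Elr, if_pos rfl]
      have hr1 : (((r+1:ℕ)):ℝ) ≠ 0 := by positivity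
      push_cast
      field_simp [fact_cast_ne]
      rw [hFr r]
      ring
    · rw [choose_fact_real _ _ (by omega), show 2*(r+2) - ((r+2)+0) = r+2 from by omega,
        show (r+2)+0 = r+2 from by omega]
      have hicc : Finset.Icc ((r:ℤ)+1) (((r+2:ℕ)):ℤ) = {(r:ℤ)+1, (r:ℤ)+2} := by
        ext x
        simp only [Finset.mem_Icc, Finset.mem_insert, Finset.mem_singleton]
        omega
      rw [hicc, Finset.sum_insert (by simp), Finset.sum_singleton]
      simp only [Elr, if_neg (by omega : ¬ (r+2 = r+1)),
        show 2*(r+2)-1 = 2*r+3 from by omega]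
      have hr1 : ((r:ℝ)+1) ≠ 0 := by positivity
      have hr2 : ((r:ℝ)+2) ≠ 0 := by positivity
      push_cast
      field_simp [fact_cast_ne]
      rw [show r+2 = (r+1)+1 from rfl, hFr (r+1), hFr r]
      push_cast
      ring
  · -- 1 ≤ m
    have hmne : ¬ ((m:ℤ) = 0) := by omega
    have hmne' : ¬ (-(m:ℤ) = 0) := by omega
    have e3 : (m:ℝ) ≠ 0 := by positivity
    rcases le_or_gt (m:ℤ) (r:ℤ) with hmr | hmr
    · -- middle case : 1 ≤ m ≤ r
      have hmr' : m ≤ r := by omega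
      have hsub : ((r - m : ℕ) : ℝ) = (r:ℝ) - (m:ℝ) := by
        rw [Nat.cast_sub hmr']
      have hmr'' : (m:ℝ) ≤ r := by exact_mod_cast hmr'
      simp only [aext, if_pos hmr, if_pos (by omega : -(m:ℤ) ≤ (r:ℤ)),
        aCoef, if_neg hmne, if_neg hmne', neg_one_zpow_neg_natCast, zpow_natCast,
        Int.cast_neg, Int.cast_natCast, div_neg, neg_neg]
      rcases (by omega : l = r + 1 ∨ l = r + 2) with rfl | rfl
      · rw [show (((r+1:ℕ)):ℤ) + (m:ℤ) = (((r+m+1 : ℕ)):ℤ) from by push_cast; ring,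
          show (((r+1:ℕ)):ℤ) + -(m:ℤ) = (((r+1:ℕ)):ℤ) - ((m:ℕ):ℤ) from by ring]
        rw [show ((((r+m+1 : ℕ)):ℤ)).toNat = (r+m)+1 from by omega,
          show (((r:ℕ):ℤ) - (m:ℤ)).toNat = r - m from by omega,
          show ((((r+1:ℕ)):ℤ) - ((m:ℕ):ℤ)).toNat = (r-m)+1 from by omega,
          show (((r:ℕ):ℤ) - -((m:ℕ):ℤ)).toNat = r + m from by omega]
        rw [choose_fact_real _ _ (by omega),
          show 2*(r+1) - ((r+1)+m) = (r-m)+1 from by omega,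
          show (r+1)+m = (r+m)+1 from by omega]
        simp only [Elr, if_pos rfl]
        have e1 : ((r:ℝ)+m+1) ≠ 0 := by positivity
        have e2 : ((r:ℝ)-m+1) ≠ 0 := by nlinarith
        push_cast
        field_simp [fact_cast_ne]
        rw [hFr (r+m), hFr (r-m)]
        push_cast [hsub]
        ring
      · rw [show (((r+2:ℕ)):ℤ) + (m:ℤ) = ((((r+m+1)+1 : ℕ)):ℤ) from by push_cast; ring,
          show (((r+2:ℕ)):ℤ) + -(m:ℤ) = (((r+2:ℕ)):ℤ) - ((m:ℕ):ℤ) from by ring]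
        rw [show (((((r+m+1)+1 : ℕ)):ℤ)).toNat = ((r+m)+1)+1 from by omega,
          show (((r:ℕ):ℤ) - (m:ℤ)).toNat = r - m from by omega,
          show ((((r+2:ℕ)):ℤ) - ((m:ℕ):ℤ)).toNat = ((r-m)+1)+1 from by omega,
          show (((r:ℕ):ℤ) - -((m:ℕ):ℤ)).toNat = r + m from by omega]
        rw [choose_fact_real _ _ (by omega),
          show 2*(r+2) - ((r+2)+m) = ((r-m)+1)+1 from by omega,
          show (r+2)+m = ((r+m)+1)+1 from by omega]
        simp only [Elr, if_neg (by omega : ¬ (r+2 = r+1)),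
          show 2*(r+2)-1 = 2*r+3 from by omega]
        have e1 : ((r:ℝ)+m+1) ≠ 0 := by positivity
        have e1' : ((r:ℝ)+m+1+1) ≠ 0 := by positivity
        have e2 : ((r:ℝ)-m+1) ≠ 0 := by nlinarith
        have e2' : ((r:ℝ)-m+1+1) ≠ 0 := by nlinarith
        push_cast
        field_simp [fact_cast_ne]
        rw [hFr ((r+m)+1), hFr (r+m), hFr ((r-m)+1), hFr (r-m)]
        push_cast [hsub]
        ring
    · -- high case : r < m ≤ l
      simp only [aext, if_neg (by omega : ¬ ((m:ℤ) ≤ (r:ℤ))),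
        if_pos (by omega : -(m:ℤ) ≤ (r:ℤ)), aCoef, if_neg hmne',
        neg_one_zpow_neg_natCast, Int.cast_neg, Int.cast_natCast, div_neg, neg_neg]
      rcases (by omega : l = r + 1 ∨ l = r + 2) with rfl | rfl
      · have hm' : m = r + 1 := by omega
        subst hm'
        rw [show ((((r+1:ℕ)):ℤ) + -(((r+1:ℕ)):ℤ)).toNat = 0 from by omega,
          show (((r:ℕ):ℤ) - -(((r+1:ℕ)):ℤ)).toNat = (2*r)+1 from by omega,
          show (r+1)+(r+1) = 2*(r+1) from by omega, Nat.choose_self]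
        simp only [Elr, if_pos rfl, Nat.factorial_zero,
          show 2*(r+1) = (2*r+1)+1 from by omega]
        have hr1 : ((r:ℝ)+1) ≠ 0 := by positivity
        push_cast
        field_simp [fact_cast_ne]
        rw [hFr (2*r+1), hFr r]
        push_cast
        ring
      · rcases (by omega : m = r + 1 ∨ m = r + 2) with rfl | rfl
        · rw [show ((((r+2:ℕ)):ℤ) + -(((r+1:ℕ)):ℤ)).toNat = 1 from by omega,
            show (((r:ℕ):ℤ) - -(((r+1:ℕ)):ℤ)).toNat = (2*r)+1 from by omega,
            show (r+2)+(r+1) = 2*r+3 from by omega,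
            show 2*(r+2) = (2*r+3)+1 from by omega, Nat.choose_succ_self_right]
          simp only [Elr, if_neg (by omega : ¬ (r+2 = r+1)),
            show 2*(r+2)-1 = 2*r+3 from by omega, Nat.factorial_one,
            show 2*(r+2) = (((2*r+1)+1)+1)+1 from by omega]
          have hr1 : ((r:ℝ)+1) ≠ 0 := by positivity
          have hr3 : (2*(r:ℝ)+3) ≠ 0 := by positivity
          push_cast
          field_simp [fact_cast_ne]
          rw [hFr (((2*r+1)+1)+1), hFr ((2*r+1)+1), hFr (2*r+1),
            show r+2 = (r+1)+1 from rfl, hFr (r+1), hFr r]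
          push_cast
          ring
        · rw [show ((((r+2:ℕ)):ℤ) + -(((r+2:ℕ)):ℤ)).toNat = 0 from by omega,
            show (((r:ℕ):ℤ) - -(((r+2:ℕ)):ℤ)).toNat = (2*r)+2 from by omega,
            show (r+2)+(r+2) = 2*(r+2) from by omega, Nat.choose_self]
          simp only [Elr, if_neg (by omega : ¬ (r+2 = r+1)),
            show 2*(r+2)-1 = 2*r+3 from by omega, Nat.factorial_zero,
            show 2*(r+2) = ((2*r+2)+1)+1 from by omega]
          have hr2 : ((r:ℝ)+2) ≠ 0 := by positivity
          push_cast
          field_simp [fact_cast_ne]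
          rw [hFr ((2*r+2)+1), hFr (2*r+2),
            show r+2 = (r+1)+1 from rfl, hFr (r+1), hFr r]
          push_cast
          ring


open Finset

lemma map_range_eq_Icc (n : ℕ) :
    (Finset.range (2*n+1)).map ⟨fun j : ℕ => (j:ℤ) - n, show Function.Injective (fun j : ℕ => (j:ℤ) - n) from by intro a b h; simp only at h; omega⟩
      = Finset.Icc (-(n:ℤ)) n := by
  ext k
  simp only [Finset.mem_map, Finset.mem_range, Finset.mem_Icc,
    Function.Embedding.coeFn_mk]
  constructor
  · rintro ⟨j, hj, rfl⟩; omega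
  · intro hk; exact ⟨(k + n).toNat, by omega, by omega⟩

lemma neg_one_zpow_sub (j n : ℕ) :
    (-1:ℂ)^((j:ℤ) - (n:ℤ)) = (-1)^j * (-1)^n := by
  rw [zpow_sub₀ (by norm_num : (-1:ℂ) ≠ 0), zpow_natCast, zpow_natCast]
  rw [div_eq_mul_inv, ← inv_pow]
  norm_num

lemma expand_pow (n : ℕ) (z : ℂ) (hz : z ≠ 0) :
    ∑ k ∈ Finset.Icc (-(n:ℤ)) n,
        ((-1:ℂ)^k * (((2*n).choose ((n:ℤ)+k).toNat : ℕ) : ℂ)) * z^k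
      = (-1)^n * z ^ (-(n:ℤ)) * (1 - z)^(2*n) := by
  rw [← map_range_eq_Icc n, Finset.sum_map]
  have h1 : (1 - z)^(2*n)
      = ∑ j ∈ Finset.range (2*n+1), (-z)^j * 1^(2*n - j) * ((2*n).choose j : ℂ) := by
    rw [← add_pow]; ring_nf
  rw [h1, Finset.mul_sum]
  refine Finset.sum_congr rfl ?_
  intro j hj
  simp only [Function.Embedding.coeFn_mk]
  have hjn : ((n:ℤ) + ((j:ℤ) - n)).toNat = j := by omega
  rw [hjn, neg_one_zpow_sub]
  have h3 : z^((j:ℤ) - (n:ℤ)) = z^j * z^(-(n:ℤ)) := by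
    rw [zpow_sub₀ hz, zpow_natCast, zpow_neg, zpow_natCast, div_eq_mul_inv]
  rw [h3]
  rw [neg_pow z j]
  ring

lemma sum_Icc_neg (n : ℕ) (f : ℤ → ℂ) :
    ∑ k ∈ Finset.Icc (-(n:ℤ)) n, f (-k) = ∑ k ∈ Finset.Icc (-(n:ℤ)) n, f k := by
  refine Finset.sum_nbij' (fun k => -k) (fun k => -k) ?_ ?_ ?_ ?_ ?_ <;>
    intros <;> simp_all [Finset.mem_Icc] <;> omega

lemma ofReal_zpow' (x : ℝ) (k : ℤ) : (((x ^ k : ℝ)) : ℂ) = (x:ℂ) ^ k :=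
  map_zpow₀ Complex.ofRealHom x k

lemma coeff_pair_nat_int (l r : ℕ) (h1 : r + 1 ≤ l) (h2 : l ≤ r + 2) (k : ℤ)
    (hk : k ∈ Finset.Icc (-(l:ℤ)) (l:ℤ)) :
    aext l r k + aext l r (-k)
      = 2 * Elr l r * (-1:ℝ)^k * (((2*l).choose ((l:ℤ)+k).toNat : ℕ) : ℝ) := by
  simp only [Finset.mem_Icc] at hk
  rcases le_or_gt 0 k with hk0 | hk0
  · obtain ⟨m, rfl⟩ : ∃ m : ℕ, k = (m:ℤ) := ⟨k.toNat, by omega⟩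
    rw [show ((l:ℤ) + (m:ℤ)).toNat = l + m from by omega, zpow_natCast]
    exact coeff_pair_nat l r h1 h2 m (by omega)
  · obtain ⟨m, rfl⟩ : ∃ m : ℕ, k = -(m:ℤ) := ⟨(-k).toNat, by omega⟩
    rw [show ((l:ℤ) + -(m:ℤ)).toNat = l - m from by omega, neg_neg, add_comm,
      neg_one_zpow_neg_natCast,
      show l - m = 2*l - (l+m) from by omega, Nat.choose_symm (by omega)]
    exact coeff_pair_nat l r h1 h2 m (by omega)

lemma lam0_ext (l r : ℕ) (hrl : r ≤ l) (z : ℂ) :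
    lam0 l r z = -∑ k ∈ Finset.Icc (-(l:ℤ)) (l:ℤ), (aext l r k : ℂ) * z ^ k := by
  unfold lam0
  congr 1
  calc ∑ k ∈ Finset.Icc (-(l:ℤ)) (r:ℤ), (aCoef l r k : ℂ) * z ^ k
      = ∑ k ∈ Finset.Icc (-(l:ℤ)) (r:ℤ), (aext l r k : ℂ) * z ^ k := by
        refine Finset.sum_congr rfl (fun x hx => ?_)
        simp only [Finset.mem_Icc] at hx
        simp only [aext, if_pos (by omega : x ≤ (r:ℤ))]
    _ = ∑ k ∈ Finset.Icc (-(l:ℤ)) (l:ℤ), (aext l r k : ℂ) * z ^ k := by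
        refine Finset.sum_subset
          (Finset.Icc_subset_Icc_right (show (r:ℤ) ≤ (l:ℤ) by exact_mod_cast hrl)) ?_
        intro x hx hx'
        simp only [Finset.mem_Icc] at hx hx'
        simp only [aext, if_neg (by omega : ¬ (x ≤ (r:ℤ)))]
        simp

lemma lam0_add_inv (l r : ℕ) (h1 : r + 1 ≤ l) (h2 : l ≤ r + 2) (z : ℂ) (hz : z ≠ 0) :
    lam0 l r z + lam0 l r z⁻¹
      = -(2 * ((Elr l r : ℝ) : ℂ)) * ((-1:ℂ)^l * z^(-(l:ℤ)) * (1-z)^(2*l)) := by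
  rw [lam0_ext l r (by omega) z, lam0_ext l r (by omega) z⁻¹]
  have hinv : ∑ k ∈ Finset.Icc (-(l:ℤ)) (l:ℤ), (aext l r k : ℂ) * (z⁻¹) ^ k
      = ∑ k ∈ Finset.Icc (-(l:ℤ)) (l:ℤ), (aext l r (-k) : ℂ) * z ^ k := by
    rw [← sum_Icc_neg l (fun k => (aext l r (-k) : ℂ) * z ^ k)]
    refine Finset.sum_congr rfl ?_
    intro k hk
    rw [neg_neg, inv_zpow, ← zpow_neg]
  rw [hinv, ← neg_add, ← Finset.sum_add_distrib]
  have hterm : ∀ k ∈ Finset.Icc (-(l:ℤ)) (l:ℤ),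
      (aext l r k : ℂ) * z ^ k + (aext l r (-k) : ℂ) * z ^ k
        = (2 * ((Elr l r : ℝ) : ℂ)) *
            (((-1:ℂ)^k * (((2*l).choose ((l:ℤ)+k).toNat : ℕ) : ℂ)) * z ^ k) := by
    intro k hk
    rw [← add_mul, ← Complex.ofReal_add, coeff_pair_nat_int l r h1 h2 k hk]
    push_cast
    ring
  rw [Finset.sum_congr rfl hterm, ← Finset.mul_sum, expand_pow l z hz]
  ring

lemma lam0_one (l r : ℕ) (h1 : r + 1 ≤ l) (h2 : l ≤ r + 2) : lam0 l r 1 = 0 := by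
  have h := lam0_add_inv l r h1 h2 1 one_ne_zero
  simp only [inv_one, sub_self, zero_pow (by omega : 2*l ≠ 0), mul_zero] at h
  have : (2:ℂ) * lam0 l r 1 = 0 := by rw [two_mul]; simpa using h
  exact (mul_eq_zero.mp this).resolve_left two_ne_zero

lemma conj_lam0 (l r : ℕ) (z : ℂ) :
    (starRingEnd ℂ) (lam0 l r z) = lam0 l r ((starRingEnd ℂ) z) := by
  unfold lam0
  rw [map_neg, map_sum]
  congr 1
  refine Finset.sum_congr rfl (fun k hk => ?_)
  rw [map_mul, Complex.conj_ofReal, map_zpow₀]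

lemma conj_eq_inv_of_abs_one {z : ℂ} (hz : ‖z‖ = 1) :
    (starRingEnd ℂ) z = z⁻¹ := by
  have h0 : z ≠ 0 := by
    intro h; rw [h] at hz; simp at hz
  field_simp
  rw [mul_comm, Complex.mul_conj]
  norm_cast
  rw [← Complex.sq_norm, hz]
  norm_num

lemma normSq_circle (z : ℂ) (hz : ‖z‖ = 1) :
    (1-z) * (1-z⁻¹) = ((Complex.normSq (1-z) : ℝ) : ℂ) := by
  rw [← Complex.mul_conj, map_sub, map_one, conj_eq_inv_of_abs_one hz]

lemma re_lam0 (l r : ℕ) (h1 : r + 1 ≤ l) (h2 : l ≤ r + 2) (z : ℂ)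
    (hz : ‖z‖ = 1) :
    (lam0 l r z).re = -(Elr l r) * (Complex.normSq (1-z))^l := by
  have h0 : z ≠ 0 := by intro h; rw [h] at hz; simp at hz
  have key : lam0 l r z + (starRingEnd ℂ) (lam0 l r z)
      = ((-(2 * Elr l r) * (Complex.normSq (1-z))^l : ℝ) : ℂ) := by
    rw [conj_lam0, conj_eq_inv_of_abs_one hz, lam0_add_inv l r h1 h2 z h0]
    have hW : ((-1:ℂ)^l * z^(-(l:ℤ)) * (1-z)^(2*l)) = ((1-z) * (1-z⁻¹))^l := by
      have h' : (1-z) * (1-z⁻¹) = -z⁻¹ * (1-z)^2 := by field_simp; ring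
      have e1 : (-z⁻¹ : ℂ)^l = (-1)^l * z^(-(l:ℤ)) := by
        rw [neg_eq_neg_one_mul, mul_pow, inv_pow, ← zpow_natCast z, ← zpow_neg]
      have e2 : ((1-z)^2)^l = (1-z)^(2*l) := by rw [← pow_mul, mul_comm]
      rw [h', mul_pow, e1, e2]
    rw [hW, normSq_circle z hz, ← Complex.ofReal_pow]
    push_cast
    ring
  have := congrArg Complex.re key
  rw [Complex.add_re, Complex.conj_re, Complex.ofReal_re] at this
  linarith

lemma abs_zpow_sub_one_nat (z : ℂ) (hz : ‖z‖ = 1) (n : ℕ) :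
    ‖z^n - 1‖ ≤ n * ‖z - 1‖ := by
  induction n with
  | zero => simp
  | succ n ih =>
    have : z^(n+1) - 1 = z^n * (z - 1) + (z^n - 1) := by ring
    rw [this]
    calc ‖z^n * (z-1) + (z^n - 1)‖
        ≤ ‖z^n * (z-1)‖ + ‖z^n - 1‖ := norm_add_le _ _
      _ ≤ 1 * ‖z-1‖ + n * ‖z-1‖ := by
          rw [norm_mul, norm_pow, hz, one_pow]
          linarith
      _ = (n+1 : ℕ) * ‖z-1‖ := by push_cast; ring

lemma abs_zpow_sub_one (z : ℂ) (hz : ‖z‖ = 1) (k : ℤ) :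
    ‖z^k - 1‖ ≤ |(k:ℝ)| * ‖z - 1‖ := by
  have h0 : z ≠ 0 := by intro h; rw [h] at hz; simp at hz
  rcases le_or_gt 0 k with hk | hk
  · obtain ⟨m, rfl⟩ : ∃ m : ℕ, k = (m:ℤ) := ⟨k.toNat, by omega⟩
    rw [zpow_natCast]
    have := abs_zpow_sub_one_nat z hz m
    calc ‖z^m - 1‖ ≤ m * ‖z-1‖ := this
      _ = |((m:ℤ):ℝ)| * ‖z-1‖ := by
          rw [abs_of_nonneg (by positivity)]; norm_num
  · obtain ⟨m, rfl⟩ : ∃ m : ℕ, k = -(m:ℤ) := ⟨(-k).toNat, by omega⟩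
    have habs : ‖z^(-(m:ℤ)) - 1‖ = ‖z^m - 1‖ := by
      have : z^(-(m:ℤ)) - 1 = (z^m)⁻¹ * (1 - z^m) := by
        rw [zpow_neg, zpow_natCast]
        field_simp
      rw [this, norm_mul, norm_inv, norm_pow, hz]
      simp [norm_sub_rev]
    rw [habs]
    have hcast : |(((-(m:ℤ)) : ℤ):ℝ)| = (m:ℝ) := by
      push_cast
      rw [abs_neg, abs_of_nonneg (Nat.cast_nonneg m)]
    rw [hcast]
    exact abs_zpow_sub_one_nat z hz m

lemma abs_lam0_le (l r : ℕ) (h1 : r + 1 ≤ l) (h2 : l ≤ r + 2) (z : ℂ)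
    (hz : ‖z‖ = 1) :
    ‖lam0 l r z‖
      ≤ (∑ k ∈ Finset.Icc (-(l:ℤ)) (r:ℤ), |aCoef l r k| * |(k:ℝ)|)
          * ‖z - 1‖ := by
  have hsum0 : (∑ k ∈ Finset.Icc (-(l:ℤ)) (r:ℤ), ((aCoef l r k : ℝ):ℂ)) = 0 := by
    have h := lam0_one l r h1 h2
    unfold lam0 at h
    rw [neg_eq_zero] at h
    simpa using h
  have hrepr : lam0 l r z
      = -∑ k ∈ Finset.Icc (-(l:ℤ)) (r:ℤ), (aCoef l r k : ℂ) * (z^k - 1) := by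
    unfold lam0
    rw [Finset.sum_congr rfl (fun k _ => mul_sub ((aCoef l r k:ℂ)) (z^k) 1),
      Finset.sum_sub_distrib]
    simp [hsum0]
  rw [hrepr, norm_neg]
  calc ‖∑ k ∈ Finset.Icc (-(l:ℤ)) (r:ℤ), (aCoef l r k : ℂ) * (z^k - 1)‖
      ≤ ∑ k ∈ Finset.Icc (-(l:ℤ)) (r:ℤ), ‖(aCoef l r k : ℂ) * (z^k - 1)‖ :=
        norm_sum_le _ _
    _ ≤ ∑ k ∈ Finset.Icc (-(l:ℤ)) (r:ℤ), |aCoef l r k| * |(k:ℝ)| * ‖z - 1‖ := by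
        refine Finset.sum_le_sum (fun k hk => ?_)
        rw [norm_mul, Complex.norm_real, Real.norm_eq_abs, mul_assoc]
        exact mul_le_mul_of_nonneg_left (abs_zpow_sub_one z hz k) (abs_nonneg _)
    _ = (∑ k ∈ Finset.Icc (-(l:ℤ)) (r:ℤ), |aCoef l r k| * |(k:ℝ)|) * ‖z - 1‖ := by
        rw [← Finset.sum_mul]

noncomputable def gam (m : ℕ) : ℝ :=
  2 * ((Nat.factorial (m-1) : ℕ) : ℝ)^2 / ((Nat.factorial (2*m) : ℕ) : ℝ)

lemma gam_pos (m : ℕ) : 0 < gam m := by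
  unfold gam
  have h1 : (0:ℝ) < ((Nat.factorial (m-1) : ℕ) : ℝ) := by
    exact_mod_cast (Nat.factorial_pos _)
  have h2 : (0:ℝ) < ((Nat.factorial (2*m) : ℕ) : ℝ) := by
    exact_mod_cast (Nat.factorial_pos _)
  positivity

lemma neg_one_zpow_neg (k : ℤ) : (-1:ℝ)^(-k) = (-1:ℝ)^k := by
  rcases le_or_gt 0 k with hk | hk
  · obtain ⟨m, rfl⟩ : ∃ m : ℕ, k = (m:ℤ) := ⟨k.toNat, by omega⟩
    rw [neg_one_zpow_neg_natCast, zpow_natCast]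
  · obtain ⟨m, rfl⟩ : ∃ m : ℕ, k = -(m:ℤ) := ⟨(-k).toNat, by omega⟩
    rw [neg_neg, neg_one_zpow_neg_natCast, zpow_natCast]

lemma bCoef_neg (q : ℕ) (k : ℤ) : bCoef q (-k) = bCoef q k := by
  rcases eq_or_ne k 0 with rfl | hk0
  · simp
  · unfold bCoef
    rw [if_neg (by omega : ¬ (-k = 0)), if_neg hk0, neg_one_zpow_neg, Int.cast_neg,
      show (q:ℤ) + -k = (q:ℤ) - k from by ring, show (q:ℤ) - -k = (q:ℤ) + k from by ring]
    push_cast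
    ring

lemma W_pow (n : ℕ) (z : ℂ) (hz : z ≠ 0) :
    ((1-z) * (1-z⁻¹))^n = (-1:ℂ)^n * z^(-(n:ℤ)) * (1-z)^(2*n) := by
  have h' : (1-z) * (1-z⁻¹) = -z⁻¹ * (1-z)^2 := by field_simp; ring
  have e1 : (-z⁻¹ : ℂ)^n = (-1)^n * z^(-(n:ℤ)) := by
    rw [neg_eq_neg_one_mul, mul_pow, inv_pow, ← zpow_natCast z, ← zpow_neg]
  have e2 : ((1-z)^2)^n = (1-z)^(2*n) := by rw [← pow_mul, mul_comm]
  rw [h', mul_pow, e1, e2]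

lemma bkey_nat (q : ℕ) (hq : 1 ≤ q) (m : ℕ) (hm : m ≤ q+1) :
    bCoef (q+1) (m:ℤ) - (if (-(q:ℤ) ≤ (m:ℤ) ∧ (m:ℤ) ≤ (q:ℤ)) then bCoef q (m:ℤ) else 0)
      = -(gam (q+1)) * (-1:ℝ)^m * (((2*(q+1)).choose ((q+1)+m) : ℕ) : ℝ) := by
  have hFr : ∀ n : ℕ, ((Nat.factorial (n+1) : ℕ) : ℝ)
      = ((n:ℝ)+1) * ((Nat.factorial n : ℕ) : ℝ) := by
    intro n; rw [Nat.factorial_succ]; push_cast; ring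
  have hq1 : ((q:ℝ)+1) ≠ 0 := by positivity
  rcases Nat.eq_zero_or_pos m with rfl | hm1
  · -- m = 0
    rw [if_pos (by omega : -(q:ℤ) ≤ ((0:ℕ):ℤ) ∧ ((0:ℕ):ℤ) ≤ (q:ℤ))]
    simp only [Nat.cast_zero, bCoef, if_pos rfl, pow_zero]
    rw [Finset.sum_Icc_succ_top (by omega : 1 ≤ q+1)]
    rw [choose_fact_real _ _ (by omega), show 2*(q+1) - ((q+1)+0) = q+1 from by omega,
      show (q+1)+0 = q+1 from by omega]
    unfold gam
    rw [show (q+1)-1 = q from rfl]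
    push_cast
    field_simp [fact_cast_ne]
    rw [hFr q]
    push_cast
    ring
  · have hmne : ¬ ((m:ℤ) = 0) := by omega
    have e3 : (m:ℝ) ≠ 0 := by positivity
    rcases (by omega : m ≤ q ∨ m = q+1) with hmq | rfl
    · -- 1 ≤ m ≤ q
      have hsub : ((q - m : ℕ) : ℝ) = (q:ℝ) - (m:ℝ) := by
        rw [Nat.cast_sub hmq]
      rw [if_pos (by omega : -(q:ℤ) ≤ ((m:ℕ):ℤ) ∧ ((m:ℕ):ℤ) ≤ (q:ℤ))]
      simp only [bCoef, if_neg hmne, zpow_natCast, Int.cast_natCast]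
      rw [show (((q+1:ℕ)):ℤ) + (m:ℤ) = ((((q+m+1) : ℕ)):ℤ) from by push_cast; ring,
        show (((q+1:ℕ)):ℤ) - (m:ℤ) = (((q+1:ℕ)):ℤ) - ((m:ℕ):ℤ) from rfl]
      rw [show (((((q+m+1) : ℕ)):ℤ)).toNat = (q+m)+1 from by omega,
        show ((((q+1:ℕ)):ℤ) - ((m:ℕ):ℤ)).toNat = (q-m)+1 from by omega,
        show (((q:ℕ):ℤ) + ((m:ℕ):ℤ)).toNat = q+m from by omega,
        show (((q:ℕ):ℤ) - ((m:ℕ):ℤ)).toNat = q-m from by omega]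
      rw [choose_fact_real _ _ (by omega),
        show 2*(q+1) - ((q+1)+m) = (q-m)+1 from by omega,
        show (q+1)+m = (q+m)+1 from by omega]
      unfold gam
      rw [show (q+1)-1 = q from rfl]
      have e1 : ((q:ℝ)+m+1) ≠ 0 := by positivity
      have hmq' : (m:ℝ) ≤ q := by exact_mod_cast hmq
      have e2 : ((q:ℝ)-m+1) ≠ 0 := by nlinarith
      push_cast
      field_simp [fact_cast_ne]
      rw [hFr (q+m), hFr (q-m), hFr q]
      push_cast [hsub]
      ring
    · -- m = q+1
      rw [if_neg (by omega : ¬ (-(q:ℤ) ≤ (((q+1):ℕ):ℤ) ∧ (((q+1):ℕ):ℤ) ≤ (q:ℤ))), sub_zero]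
      simp only [bCoef, if_neg hmne, zpow_natCast, Int.cast_natCast]
      rw [show ((((q+1):ℕ)):ℤ) + ((((q+1):ℕ)):ℤ) = (((2*(q+1) : ℕ)):ℤ) from by push_cast; ring]
      rw [show ((((2*(q+1) : ℕ)):ℤ)).toNat = 2*(q+1) from by omega,
        show (((((q+1):ℕ)):ℤ) - ((((q+1):ℕ)):ℤ)).toNat = 0 from by omega,
        show (q+1)+(q+1) = 2*(q+1) from by omega, Nat.choose_self]
      unfold gam
      rw [show (q+1)-1 = q from rfl]
      simp only [Nat.factorial_zero]
      push_cast
      field_simp [fact_cast_ne]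
      rw [hFr q]
      push_cast
      ring

lemma bkey_int (q : ℕ) (hq : 1 ≤ q) (k : ℤ) (hk : k ∈ Finset.Icc (-((q+1:ℕ)):ℤ) ((q+1:ℕ):ℤ)) :
    bCoef (q+1) k - (if -(q:ℤ) ≤ k ∧ k ≤ (q:ℤ) then bCoef q k else 0)
      = -(gam (q+1)) * (-1:ℝ)^k * (((2*(q+1)).choose ((((q+1):ℕ):ℤ) + k).toNat : ℕ) : ℝ) := by
  simp only [Finset.mem_Icc] at hk
  rcases le_or_gt 0 k with hk0 | hk0
  · obtain ⟨m, rfl⟩ : ∃ m : ℕ, k = (m:ℤ) := ⟨k.toNat, by omega⟩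
    rw [show (((q+1:ℕ)):ℤ) + (m:ℤ) = ((((q+1)+m : ℕ)):ℤ) from by push_cast; ring,
      show (((((q+1)+m : ℕ)):ℤ)).toNat = (q+1)+m from by omega, zpow_natCast]
    exact bkey_nat q hq m (by omega)
  · obtain ⟨m, rfl⟩ : ∃ m : ℕ, k = -(m:ℤ) := ⟨(-k).toNat, by omega⟩
    rw [bCoef_neg (q+1) (m:ℤ), neg_one_zpow_neg,
      show (((q+1:ℕ)):ℤ) + -(m:ℤ) = (((q+1:ℕ)):ℤ) - ((m:ℕ):ℤ) from by ring,
      show ((((q+1:ℕ)):ℤ) - ((m:ℕ):ℤ)).toNat = (q+1) - m from by omega,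
      show (q+1) - m = 2*(q+1) - ((q+1)+m) from by omega,
      Nat.choose_symm (by omega : (q+1)+m ≤ 2*(q+1)), zpow_natCast]
    have hcond : (-(q:ℤ) ≤ -(m:ℤ) ∧ -(m:ℤ) ≤ (q:ℤ)) ↔ (-(q:ℤ) ≤ ((m:ℕ):ℤ) ∧ ((m:ℕ):ℤ) ≤ (q:ℤ)) := by
      omega
    rw [if_congr hcond (bCoef_neg q (m:ℤ)) rfl]
    exact bkey_nat q hq m (by omega)

lemma lamInf_repr : ∀ (q : ℕ), 1 ≤ q → ∀ z : ℂ, z ≠ 0 →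
    lamInf q z = -∑ m ∈ Finset.Icc 1 q, ((gam m : ℝ) : ℂ) * ((1-z) * (1-z⁻¹))^m := by
  intro q hq
  induction q, hq using Nat.le_induction with
  | base =>
    intro z hz
    have hb1 : bCoef 1 (-1) = 1 := by
      unfold bCoef
      rw [if_neg (by decide)]
      rw [show (-1:ℝ)^(-1:ℤ) = -1 from by rw [neg_one_zpow_neg]; norm_num]
      norm_num [show (((1:ℕ)):ℤ) + (-1) = 0 from by decide,
        show (((1:ℕ)):ℤ) - (-1) = 2 from by decide, Nat.factorial, show (2:ℤ).toNat = 2 from rfl]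
    have hb0 : bCoef 1 0 = -2 := by
      unfold bCoef
      rw [if_pos rfl]
      norm_num
    have hb2 : bCoef 1 1 = 1 := by
      unfold bCoef
      rw [if_neg (by decide)]
      rw [show (-1:ℝ)^(1:ℤ) = -1 from by norm_num]
      norm_num [show (((1:ℕ)):ℤ) + 1 = 2 from by decide,
        show (((1:ℕ)):ℤ) - 1 = 0 from by decide, Nat.factorial, show (2:ℤ).toNat = 2 from rfl]
    have hg1 : gam 1 = 1 := by norm_num [gam, Nat.factorial]
    unfold lamInf
    rw [show (Finset.Icc (-((1:ℕ)):ℤ) (((1:ℕ)):ℤ)) = {-1, 0, 1} from by decide]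
    rw [Finset.sum_insert (by decide), Finset.sum_insert (by decide), Finset.sum_singleton]
    rw [show (Finset.Icc 1 1) = {1} from Finset.Icc_self 1, Finset.sum_singleton]
    rw [hb1, hb0, hb2, hg1]
    push_cast
    rw [pow_one]
    field_simp
    ring
  | succ q hq ih =>
    intro z hz
    have hext : lamInf q z = ∑ k ∈ Finset.Icc (-((q+1:ℕ)):ℤ) (((q+1:ℕ)):ℤ),
        (((if -(q:ℤ) ≤ k ∧ k ≤ (q:ℤ) then bCoef q k else 0) : ℝ) : ℂ) * z^k := by
      unfold lamInf
      calc ∑ k ∈ Finset.Icc (-((q:ℕ)):ℤ) (((q:ℕ)):ℤ), ((bCoef q k:ℝ):ℂ) * z^k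
          = ∑ k ∈ Finset.Icc (-((q:ℕ)):ℤ) (((q:ℕ)):ℤ),
              (((if -(q:ℤ) ≤ k ∧ k ≤ (q:ℤ) then bCoef q k else 0) : ℝ) : ℂ) * z^k := by
            refine Finset.sum_congr rfl (fun k hk => ?_)
            simp only [Finset.mem_Icc] at hk
            rw [if_pos (by omega : -(q:ℤ) ≤ k ∧ k ≤ (q:ℤ))]
        _ = _ := by
            refine Finset.sum_subset (Finset.Icc_subset_Icc (by push_cast; omega) (by push_cast; omega)) ?_
            intro x hx hx'
            simp only [Finset.mem_Icc] at hx hx'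
            rw [if_neg (by omega)]
            simp
    have hstep : lamInf (q+1) z - lamInf q z
        = -(((gam (q+1) : ℝ)):ℂ) * ((1-z)*(1-z⁻¹))^(q+1) := by
      rw [hext]
      unfold lamInf
      rw [← Finset.sum_sub_distrib]
      have hterm : ∀ k ∈ Finset.Icc (-((q+1:ℕ)):ℤ) (((q+1:ℕ)):ℤ),
          ((bCoef (q+1) k:ℝ):ℂ) * z^k
            - (((if -(q:ℤ) ≤ k ∧ k ≤ (q:ℤ) then bCoef q k else 0) : ℝ) : ℂ) * z^k
          = (-(((gam (q+1) : ℝ)):ℂ)) *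
              (((-1:ℂ)^k * (((2*(q+1)).choose ((((q+1):ℕ):ℤ) + k).toNat : ℕ) : ℂ)) * z^k) := by
        intro k hk
        rw [← sub_mul, ← Complex.ofReal_sub, bkey_int q hq k hk]
        push_cast
        ring
      rw [Finset.sum_congr rfl hterm, ← Finset.mul_sum, expand_pow (q+1) z hz,
        W_pow (q+1) z hz]
    have hR : ∑ m ∈ Finset.Icc 1 (q+1), ((gam m : ℝ) : ℂ) * ((1-z) * (1-z⁻¹))^m
        = ∑ m ∈ Finset.Icc 1 q, ((gam m : ℝ) : ℂ) * ((1-z) * (1-z⁻¹))^m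
          + ((gam (q+1) : ℝ) : ℂ) * ((1-z) * (1-z⁻¹))^(q+1) :=
      Finset.sum_Icc_succ_top (by omega) _
    rw [hR]
    have hihz := ih z hz
    linear_combination hstep + hihz

lemma gam_one : gam 1 = 1 := by norm_num [gam, Nat.factorial]

lemma lamInf_circle (q : ℕ) (hq : 1 ≤ q) (z : ℂ) (hz : ‖z‖ = 1) :
    lamInf q z
      = ((-(∑ m ∈ Finset.Icc 1 q, gam m * (Complex.normSq (1-z))^m) : ℝ) : ℂ) := by
  have h0 : z ≠ 0 := by intro h; rw [h] at hz; simp at hz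
  rw [lamInf_repr q hq z h0]
  have hterm : ∀ m ∈ Finset.Icc 1 q, ((gam m : ℝ):ℂ) * ((1-z) * (1-z⁻¹))^m
      = (((gam m * (Complex.normSq (1-z))^m : ℝ)):ℂ) := by
    intro m hm
    rw [normSq_circle z hz]
    push_cast
    ring
  rw [Finset.sum_congr rfl hterm]
  push_cast
  ring

lemma poly_decomp (p : Polynomial ℂ) (hp0 : p.eval 0 = 1) (hp1 : p.derivative.eval 0 = 1) :
    ∃ g : Polynomial ℂ, ∀ w : ℂ, p.eval w = 1 + w + w^2 * g.eval w := by
  have hc0 : p.coeff 0 = 1 := by rw [Polynomial.coeff_zero_eq_eval_zero, hp0]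
  have hc1 : p.coeff 1 = 1 := by
    have h := Polynomial.coeff_derivative p 0
    rw [Polynomial.coeff_zero_eq_eval_zero, hp1] at h
    simpa using h.symm
  have hdvd : (Polynomial.X : Polynomial ℂ)^2 ∣ (p - Polynomial.C 1 - Polynomial.X) := by
    rw [Polynomial.X_pow_dvd_iff]
    intro d hd
    interval_cases d <;>
      simp [Polynomial.coeff_sub, hc0, hc1, Polynomial.coeff_one]
  obtain ⟨g, hg⟩ := hdvd
  refine ⟨g, fun w => ?_⟩
  have h2 := congrArg (Polynomial.eval w) hg
  simp only [Polynomial.eval_sub, Polynomial.eval_mul, Polynomial.eval_pow,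
    Polynomial.eval_X, Polynomial.eval_C, Polynomial.eval_one] at h2
  linear_combination h2

lemma poly_eval_bound (g : Polynomial ℂ) (w : ℂ) (hw : ‖w‖ ≤ 1) :
    ‖g.eval w‖
      ≤ ∑ i ∈ Finset.range (g.natDegree + 1), ‖g.coeff i‖ := by
  rw [Polynomial.eval_eq_sum_range]
  calc ‖∑ i ∈ Finset.range (g.natDegree + 1), g.coeff i * w^i‖
      ≤ ∑ i ∈ Finset.range (g.natDegree + 1), ‖g.coeff i * w^i‖ :=
        norm_sum_le _ _
    _ ≤ ∑ i ∈ Finset.range (g.natDegree + 1), ‖g.coeff i‖ := by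
        refine Finset.sum_le_sum (fun i hi => ?_)
        rw [norm_mul, norm_pow]
        refine mul_le_of_le_one_right (norm_nonneg _) ?_
        exact pow_le_one₀ (norm_nonneg _) hw


lemma sq_add_helper (x a b : ℝ) (hx : 0 ≤ x) (ha : 0 ≤ a) (hb : 0 ≤ b)
    (hxab : x ≤ a + b) : x^2 ≤ 2*a^2 + 2*b^2 := by
  nlinarith [sq_nonneg (a-b)]

lemma k2_helper (Y μ R : ℝ) (hμ : 0 < μ) (h : 4*Y*μ < R) : 2*Y*μ^2 < R*μ/2 := by
  nlinarith [mul_lt_mul_of_pos_right h hμ]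

lemma k3_helper (Z u : ℝ) (hu : 0 < u) (h : 32*Z*u < 1) : 8*Z*u^2 < u/4 := by
  nlinarith [mul_lt_mul_of_pos_right h hu]

lemma hw1_helper (x μ R CA CQ t s : ℝ) (hx : x ≤ μ*CA*t + μ*R*(CQ*s))
    (hμ : 0 < μ) (hR : 0 < R) (hCA : 0 ≤ CA) (hCQ : 0 ≤ CQ)
    (ht0 : 0 ≤ t) (ht2 : t ≤ 2) (hs0 : 0 < s) (hs4 : s ≤ 4)
    (hα : 4*(CA+1)*μ < 1) (hβ2 : 8*(CQ+1)*(R*μ) < 1) : x ≤ 1 := by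
  have f1 : μ*CA*t ≤ μ*CA*2 :=
    mul_le_mul_of_nonneg_left ht2 (mul_nonneg hμ.le hCA)
  have f2 : μ*R*(CQ*s) ≤ μ*R*(CQ*4) := by
    refine mul_le_mul_of_nonneg_left ?_ (by positivity)
    exact mul_le_mul_of_nonneg_left hs4 hCQ
  nlinarith [mul_pos hμ hR, hμ.le]

lemma h1w_helper (a u v : ℝ) (ha : 0 ≤ a) (hv : 0 ≤ v)
    (hsq : a^2 = 1 + 2*u + v) : a ≤ 1 + u + v/2 := by
  nlinarith [sq_nonneg (u + v/2), sq_nonneg (a - (1 + u + v/2))]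

lemma hcq4_helper (CQ s : ℝ) (h0 : 0 ≤ CQ) (hs0 : 0 ≤ s) (hs4 : s ≤ 4) :
    CQ^2*s ≤ (CQ+1)^2*4 := by nlinarith

lemma e3a_helper (M CA μ : ℝ) (hM : 0 ≤ M) (hCA : 0 ≤ CA) :
    2*(M+1)*CA^2*μ^2 ≤ 2*(M+1)*(CA+1)^2*μ^2 := by
  have key : (0:ℝ) ≤ (M+1)*μ^2*(2*CA+1) :=
    mul_nonneg (mul_nonneg (by linarith) (sq_nonneg μ)) (by linarith)
  nlinarith [key]

lemma final_helper (u v M : ℝ) (hv : 0 ≤ v) (hM : 0 ≤ M)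
    (hkey : (M+1) * v < -u) :
    (1 + u + v/2) + v * M < 1 := by nlinarith


/-- Conditional stability of the fully-discretized ADE method: for any stable
spatial discretization and any at-least-first-order explicit Runge–Kutta
stability polynomial `p` (`p(0) = 1`, `p'(0) = 1`), there are `α₀, β₀, γ₀ > 0`
such that whenever `δt < ν·γ₀` and `(α₀ + ν·β₀/h)·(δt/h) < 1`, all nonzero
eigenvalues `p(μ·λ_R(e^{iθ}))` (with `μ = δt/h`, `R = ν/h`) have modulus `< 1`. -/
theorem fully_discrete_ADE_conditionally_stable (l r : ℕ)
    (h1 : r + 1 ≤ l) (h2 : l ≤ r + 2) (q : ℕ) (hq : 1 ≤ q)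
    (p : Polynomial ℂ) (hp0 : p.eval 0 = 1) (hp1 : p.derivative.eval 0 = 1) :
    ∃ α₀ > (0 : ℝ), ∃ β₀ > (0 : ℝ), ∃ γ₀ > (0 : ℝ),
      ∀ h ν δt : ℝ, 0 < h → 0 < ν → 0 < δt →
        δt < ν * γ₀ → (α₀ + ν * β₀ / h) * (δt / h) < 1 →
        ∀ θ : ℝ, 0 < θ → θ < 2 * Real.pi →
          ‖p.eval (((δt / h : ℝ) : ℂ) *
            (lam0 l r (Complex.exp (θ * Complex.I)) +
              ((ν / h : ℝ) : ℂ) * lamInf q (Complex.exp (θ * Complex.I))))‖ < 1 := by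

  classical
  obtain ⟨g, hg⟩ := poly_decomp p hp0 hp1
  set CA : ℝ := ∑ k ∈ Finset.Icc (-(l:ℤ)) (r:ℤ), |aCoef l r k| * |(k:ℝ)| with hCAdef
  set CQ : ℝ := ∑ m ∈ Finset.Icc 1 q, gam m * 4^(m-1) with hCQdef
  set M : ℝ := ∑ i ∈ Finset.range (g.natDegree + 1), ‖g.coeff i‖ with hMdef
  have hCA0 : 0 ≤ CA := Finset.sum_nonneg fun k _ => mul_nonneg (abs_nonneg _) (abs_nonneg _)
  have hCQ0 : 0 ≤ CQ :=
    Finset.sum_nonneg fun m _ => mul_nonneg (gam_pos m).le (by positivity)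
  have hM0 : 0 ≤ M := Finset.sum_nonneg fun i _ => norm_nonneg _
  refine ⟨4*(CA+1), by nlinarith, 32*(M+1)*(CQ+1)^2 + 8*(CQ+1), by nlinarith,
    1/(4*(M+1)*(CA+1)^2), one_div_pos.mpr (by nlinarith), ?_⟩
  intro h ν δt hh hν hδt hγcond hcfl θ hθ0 hθ2
  set μ : ℝ := δt / h with hμdef
  set R : ℝ := ν / h with hRdef
  have hμ0 : 0 < μ := div_pos hδt hh
  have hR0 : 0 < R := div_pos hν hh
  have hRμ0 : 0 < R * μ := mul_pos hR0 hμ0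
  -- consequences of the CFL-type hypotheses
  have hsum : (4*(CA+1))*μ + (32*(M+1)*(CQ+1)^2 + 8*(CQ+1))*(R*μ) < 1 := by
    have e : (4*(CA+1) + ν * (32*(M+1)*(CQ+1)^2 + 8*(CQ+1)) / h) * (δt / h)
        = (4*(CA+1))*μ + (32*(M+1)*(CQ+1)^2 + 8*(CQ+1))*(R*μ) := by
      rw [hμdef, hRdef]; ring
    rw [e] at hcfl
    exact hcfl
  have hb1nn : (0:ℝ) ≤ 32*(M+1)*(CQ+1)^2*(R*μ) :=
    mul_nonneg (mul_nonneg (by nlinarith) (sq_nonneg _)) hRμ0.le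
  have hb2nn : (0:ℝ) ≤ 8*(CQ+1)*(R*μ) :=
    mul_nonneg (by nlinarith) hRμ0.le
  have hann : (0:ℝ) ≤ 4*(CA+1)*μ := mul_nonneg (by nlinarith) hμ0.le
  have hα : (4*(CA+1))*μ < 1 := by linarith
  have hβ : 32*(M+1)*(CQ+1)^2*(R*μ) < 1 := by linarith
  have hβ2 : 8*(CQ+1)*(R*μ) < 1 := by linarith
  have hγ : μ < R * (1/(4*(M+1)*(CA+1)^2)) := by
    have e : R * (1/(4*(M+1)*(CA+1)^2)) = (ν * (1/(4*(M+1)*(CA+1)^2))) / h := by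
      rw [hRdef]; ring
    rw [hμdef, e]
    exact (div_lt_div_iff_of_pos_right hh).mpr hγcond
  have hA : 4*(M+1)*(CA+1)^2*μ < R := by
    have hpos : (0:ℝ) < 4*(M+1)*(CA+1)^2 := by nlinarith
    calc 4*(M+1)*(CA+1)^2*μ
        < 4*(M+1)*(CA+1)^2*(R*(1/(4*(M+1)*(CA+1)^2))) := by
          exact (mul_lt_mul_iff_right₀ hpos).mpr hγ
      _ = R := by field_simp
  -- the point on the unit circle
  set z : ℂ := Complex.exp (θ * Complex.I) with hzdef
  have hz0 : z ≠ 0 := Complex.exp_ne_zero _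
  have hzabs : ‖z‖ = 1 := by
    rw [hzdef, Complex.norm_exp]
    simp
  have hπ := Real.pi_pos
  have hz1 : z ≠ 1 := by
    rw [hzdef]
    intro hcon
    obtain ⟨n, hn⟩ := Complex.exp_eq_one_iff.mp hcon
    have him : θ = (n:ℝ) * (2 * Real.pi) := by
      have := congrArg Complex.im hn
      simpa using this
    rcases le_or_gt 1 n with hn1 | hn1
    · have : (1:ℝ) ≤ (n:ℝ) := by exact_mod_cast hn1
      nlinarith
    · have : (n:ℝ) ≤ 0 := by exact_mod_cast (by omega : n ≤ 0)
      nlinarith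
  set s : ℝ := Complex.normSq (1 - z) with hsdef
  set t : ℝ := ‖1 - z‖ with htdef
  have hz1' : (1:ℂ) - z ≠ 0 := sub_ne_zero.mpr (Ne.symm hz1)
  have hs0 : 0 < s := Complex.normSq_pos.mpr hz1'
  have hts : t^2 = s := Complex.sq_norm _
  have ht0 : 0 ≤ t := norm_nonneg _
  have ht2 : t ≤ 2 := by
    rw [htdef]
    calc ‖1-z‖ ≤ ‖(1:ℂ)‖ + ‖z‖ := by
          exact norm_sub_le _ _
      _ = 2 := by rw [hzabs]; simp; norm_num
  have hs4 : s ≤ 4 := by nlinarith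
  -- lam0 facts
  have hre0 : (lam0 l r z).re ≤ 0 := by
    rw [re_lam0 l r h1 h2 z hzabs]
    have h1' := Elr_nonneg l r
    have h2' : (0:ℝ) ≤ (Complex.normSq (1-z))^l :=
      pow_nonneg (Complex.normSq_nonneg _) l
    nlinarith
  have habs0 : ‖lam0 l r z‖ ≤ CA * t := by
    have hb := abs_lam0_le l r h1 h2 z hzabs
    calc ‖lam0 l r z‖
        ≤ CA * ‖z - 1‖ := hb
      _ = CA * t := by
          rw [htdef, show z - 1 = -(1-z) from by ring, norm_neg]
  -- lamInf facts
  set G : ℝ := ∑ m ∈ Finset.Icc 1 q, gam m * s^m with hGdef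
  have hlamInf : lamInf q z = ((-G : ℝ) : ℂ) := by
    rw [lamInf_circle q hq z hzabs]
  have hGs : s ≤ G := by
    have h1m : (1:ℕ) ∈ Finset.Icc 1 q := by simp [Finset.mem_Icc]; omega
    have hle := Finset.single_le_sum
      (f := fun m => gam m * s^m)
      (fun m _ => mul_nonneg (gam_pos m).le (pow_nonneg hs0.le m)) h1m
    rw [hGdef]
    calc s = gam 1 * s^1 := by rw [gam_one]; ring
      _ ≤ _ := hle
  have hG0 : 0 < G := lt_of_lt_of_le hs0 hGs
  have hGle : G ≤ CQ * s := by
    rw [hGdef, hCQdef, Finset.sum_mul]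
    refine Finset.sum_le_sum (fun m hm => ?_)
    simp only [Finset.mem_Icc] at hm
    have hsm : s^m ≤ 4^(m-1) * s := by
      calc s^m = s^(m-1) * s := by
            rw [← pow_succ, show (m-1)+1 = m from by omega]
        _ ≤ 4^(m-1) * s := by
            refine mul_le_mul_of_nonneg_right ?_ hs0.le
            exact pow_le_pow_left₀ hs0.le hs4 _
    calc gam m * s^m ≤ gam m * (4^(m-1)*s) :=
          mul_le_mul_of_nonneg_left hsm (gam_pos m).le
      _ = gam m * 4^(m-1) * s := by ring
  -- the eigenvalue argument w
  set w : ℂ := ((μ:ℝ):ℂ) * (lam0 l r z + ((R:ℝ):ℂ) * lamInf q z) with hwdef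
  have hwrepr : w = ((μ:ℝ):ℂ) * lam0 l r z + (((μ*R*(-G) : ℝ)):ℂ) := by
    rw [hwdef, hlamInf]
    push_cast
    ring
  have hwre : w.re = μ * (lam0 l r z).re + μ*R*(-G) := by
    rw [hwrepr, Complex.add_re, Complex.re_ofReal_mul, Complex.ofReal_re]
  have hwre_le : w.re ≤ -(μ*R*s) := by
    have k1 : μ * (lam0 l r z).re ≤ 0 :=
      mul_nonpos_of_nonneg_of_nonpos hμ0.le hre0
    have k2 : μ*R*s ≤ μ*R*G :=
      mul_le_mul_of_nonneg_left hGs (by positivity)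
    rw [hwre]; linarith
  have habsw : ‖w‖ ≤ μ*CA*t + μ*R*(CQ*s) := by
    have habsG : ‖(((μ*R*(-G) : ℝ)):ℂ)‖ = μ*R*G := by
      rw [Complex.norm_real, Real.norm_eq_abs, abs_of_nonpos (by nlinarith), ]
      ring
    calc ‖w‖
        ≤ ‖((μ:ℝ):ℂ) * lam0 l r z‖ + ‖(((μ*R*(-G) : ℝ)):ℂ)‖ := by
          rw [hwrepr]; exact norm_add_le _ _
      _ = μ * ‖lam0 l r z‖ + μ*R*G := by
          rw [norm_mul, Complex.norm_real, Real.norm_eq_abs, abs_of_pos hμ0, habsG]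
      _ ≤ μ * (CA*t) + μ*R*(CQ*s) := by
          refine add_le_add (mul_le_mul_of_nonneg_left habs0 hμ0.le) ?_
          exact mul_le_mul_of_nonneg_left hGle (by positivity)
      _ = μ*CA*t + μ*R*(CQ*s) := by ring
  have hw1 : ‖w‖ ≤ 1 :=
    hw1_helper _ μ R CA CQ t s habsw hμ0 hR0 hCA0 hCQ0 ht0 ht2 hs0 hs4 hα hβ2
  -- key quadratic estimate
  have habsw2 : (‖w‖)^2 ≤ 2*(μ*CA*t)^2 + 2*(μ*R*(CQ*s))^2 :=
    sq_add_helper _ _ _ (norm_nonneg _) (by positivity) (by positivity) habsw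
  have k2 : 2*((M+1)*(CA+1)^2)*μ^2 < R*μ/2 :=
    k2_helper _ _ _ hμ0 (by linarith only [hA])
  have hcq4 : CQ^2*s ≤ (CQ+1)^2*4 := hcq4_helper CQ s hCQ0 hs0.le hs4
  have k3 : 8*((M+1)*(CQ+1)^2)*(R*μ)^2 < R*μ/4 :=
    k3_helper _ _ hRμ0 (by linarith only [hβ])
  have e3c : 2*(M+1)*CQ^2*μ^2*R^2*s ≤ 8*(M+1)*(CQ+1)^2*(R*μ)^2 := by
    calc 2*(M+1)*CQ^2*μ^2*R^2*s = (2*(M+1)*(μ*R)^2) * (CQ^2*s) := by ring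
      _ ≤ (2*(M+1)*(μ*R)^2) * ((CQ+1)^2*4) := by
          refine mul_le_mul_of_nonneg_left hcq4 ?_
          have h2M : (0:ℝ) ≤ 2*(M+1) := by linarith only [hM0]
          calc (0:ℝ) ≤ (2*(M+1))*(μ*R)^2 := mul_nonneg h2M (sq_nonneg _)
            _ = 2*(M+1)*(μ*R)^2 := by ring
      _ = 8*(M+1)*(CQ+1)^2*(R*μ)^2 := by ring
  have e3a : 2*(M+1)*CA^2*μ^2 ≤ 2*(M+1)*(CA+1)^2*μ^2 := e3a_helper M CA μ hM0 hCA0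
  have hkey : (M+1) * (‖w‖)^2 < μ*R*s := by
    have e1 : (M+1)*(‖w‖)^2
        ≤ (M+1)*(2*(μ*CA*t)^2 + 2*(μ*R*(CQ*s))^2) :=
      mul_le_mul_of_nonneg_left habsw2 (by linarith)
    have e2 : (M+1)*(2*(μ*CA*t)^2 + 2*(μ*R*(CQ*s))^2)
        = s*(2*(M+1)*CA^2*μ^2) + s*(2*(M+1)*CQ^2*μ^2*R^2*s) := by
      rw [← hts]; ring
    have e4 : s*(2*(M+1)*CA^2*μ^2) + s*(2*(M+1)*CQ^2*μ^2*R^2*s)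
        < s*(R*μ*3/4) := by
      have g1 : 2*(M+1)*CA^2*μ^2 + 2*(M+1)*CQ^2*μ^2*R^2*s < R*μ*3/4 := by
        linarith only [e3a, k2, e3c, k3]
      calc s*(2*(M+1)*CA^2*μ^2) + s*(2*(M+1)*CQ^2*μ^2*R^2*s)
          = s * (2*(M+1)*CA^2*μ^2 + 2*(M+1)*CQ^2*μ^2*R^2*s) := by ring
        _ < s*(R*μ*3/4) := by exact (mul_lt_mul_iff_right₀ hs0).mpr g1
    have e5 : s*(R*μ*3/4) < μ*R*s := by
      have hx : (0:ℝ) < μ*R*s := by positivity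
      linarith only [hx]
    linarith only [e1, e2, e4, e5]
  have hkey2 : (M+1) * (‖w‖)^2 < -w.re := by
    have hy : μ*R*s ≤ -w.re := by linarith only [hwre_le]
    linarith only [hkey, hy]
  -- final polynomial estimate
  have hgw : ‖g.eval w‖ ≤ M := poly_eval_bound g w hw1
  have h1w : ‖1 + w‖ ≤ 1 + w.re + (‖w‖)^2/2 := by
    have hsq : (‖1+w‖)^2 = 1 + 2*w.re + (‖w‖)^2 := by
      rw [Complex.sq_norm, Complex.sq_norm, Complex.normSq_apply, Complex.normSq_apply,
        Complex.add_re, Complex.add_im, Complex.one_re, Complex.one_im]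
      ring
    exact h1w_helper _ _ _ (norm_nonneg _) (sq_nonneg _) hsq
  calc ‖p.eval w‖ = ‖1 + w + w^2 * g.eval w‖ := by rw [hg w]
    _ ≤ ‖1 + w‖ + ‖w^2 * g.eval w‖ := norm_add_le _ _
    _ = ‖1 + w‖ + (‖w‖)^2 * ‖g.eval w‖ := by
        rw [norm_mul, norm_pow]
    _ ≤ (1 + w.re + (‖w‖)^2/2) + (‖w‖)^2 * M :=
        add_le_add h1w (mul_le_mul_of_nonneg_left hgw (sq_nonneg _))
    _ < 1 := final_helper _ _ _ (sq_nonneg _) hM0 hkey2
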